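/- Let $h$ be an odd positive integer with $\omega(h) \ge 175$. Then $2^{\omega(h)} < h^{3/25}$. -/

import Mathlib

open Finset

set_option maxRecDepth 1000000

/-- The first 175 odd primes. -/
def Lop : List ℕ := [3, 5, 7, 11, 13, 17, 19, 23, 29, 31, 37, 41, 43, 47, 53, 59, 61, 67, 71, 73, 79, 83, 89, 97, 101, 103, 107, 109, 113, 127, 131, 137, 139, 149, 151, 157, 163, 167, 173, 179, 181, 191, 193, 197, 199, 211, 223, 227, 229, 233, 239, 241, 251, 257, 263, 269, 271, 277, 281, 283, 293, 307, 311, 313, 317, 331, 337, 347, 349, 353, 359, 367, 373, 379, 383, 389, 397, 401, 409, 419, 421, 431, 433, 439, 443, 449, 457, 461, 463, 467, 479, 487, 491, 499, 503, 509, 521, 523, 541, 547, 557, 563, 569, 571, 577, 587, 593, 599, 601, 607, 613, 617, 619, 631, 641, 643, 647, 653, 659, 661, 673, 677, 683, 691, 701, 709, 719, 727, 733, 739, 743, 751, 757, 761, 769, 773, 787, 797, 809, 811, 821, 823, 827, 829, 839, 853, 857, 859, 863, 877, 881, 883, 887, 907, 911, 919, 929, 937, 941, 947, 953, 967, 971,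 977, 983, 991, 997, 1009, 1013, 1019, 1021, 1031, 1033, 1039, 1049]

/-- The product of the first 175 odd primes. -/
def Nop : ℕ := 12091009219833654155745847370247482429131421585378376955147136177204737363836099108749129543105093358887449049667706075293849625266250675490016939339972187635149032983473473786622974525067969043474769346884513767550243179153509013580083359882267851317629057677938230648822156568618473359563559115626565247519574264407934154580660568809000066046472906425737653501755866090078286839596444041702564460878904843508369667625274764691156509536545

lemma Lop_length : Lop.length = 175 := by decide
lemma Lop_prod : Lop.prod = Nop := by decide
lemma Lop_sorted : Lop.Pairwise (· < ·) := by decide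
lemma Lop_le : ∀ x ∈ Lop, x ≤ 1049 := by decide

set_option exponentiation.threshold 10000 in
lemma Nop_cube : 2 ^ 4375 < Nop ^ 3 := by decide

lemma c353 : 2 ^ 25 ≤ 353 ^ 3 := by decide

lemma witness : ∀ m < 1051, m % 2 = 1 → m ∉ Lop →
    m = 1 ∨ ∃ d < 37, 2 ≤ d ∧ d ≠ m ∧ d ∣ m := by decide

lemma odd_primes_mem : ∀ m < 1051, m % 2 = 1 → Nat.Prime m → m ∈ Lop := by
  intro m hm ho hp
  by_contra hmem
  rcases witness m hm ho hmem with h1 | ⟨d, _, hd2, hdm, hdvd⟩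
  · exact Nat.not_prime_one (h1 ▸ hp)
  · rcases hp.eq_one_or_self_of_dvd d hdvd with h | h
    · omega
    · exact hdm h

/-- Bounding function: the `i`-th smallest odd prime is at least `F i`. -/
def F (i : ℕ) : ℕ := if i < 175 then Lop.getD i 0 else 2 * i + 3

lemma sorted_getElem_le {l : List ℕ} (hs : l.Pairwise (· < ·)) {i j : ℕ}
    (hij : i ≤ j) (hj : j < l.length) : l[i]'(lt_of_le_of_lt hij hj) ≤ l[j] := by
  rcases eq_or_lt_of_le hij with rfl | hlt
  · exact le_refl _
  · exact le_of_lt ((List.pairwise_iff_getElem.mp hs) i j _ hj hlt)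

lemma Lop_next_le {x i : ℕ} (hx : x ∈ Lop) (hi : i + 1 < Lop.length)
    (hgt : Lop.getD i 0 < x) : Lop.getD (i + 1) 0 ≤ x := by
  rcases List.mem_iff_getElem.mp hx with ⟨j, hj, rfl⟩
  rw [List.getD_eq_getElem Lop 0 hi]
  rw [List.getD_eq_getElem Lop 0 (by omega : i < Lop.length)] at hgt
  have hij : i + 1 ≤ j := by
    by_contra hc
    exact absurd (sorted_getElem_le Lop_sorted (by omega : j ≤ i) (by omega)) (by omega)
  exact sorted_getElem_le Lop_sorted hij hj

lemma getD_bound {l : List ℕ} (hs : l.Pairwise (· < ·))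
    (hp : ∀ x ∈ l, x.Prime ∧ x % 2 = 1) :
    ∀ i, i < l.length → F i ≤ l.getD i 0 := by
  intro i
  induction i with
  | zero =>
    intro h0
    rw [List.getD_eq_getElem l 0 h0]
    have hmem := List.getElem_mem h0
    have := hp _ hmem
    have h2 := this.1.two_le
    have : F 0 = 3 := by decide
    omega
  | succ i ih =>
    intro hi1
    have hi : i < l.length := by omega
    have ihv := ih hi
    have ha := hp _ (List.getElem_mem hi)
    have hb := hp _ (List.getElem_mem hi1)
    have hab : l[i] < l[i + 1] := (List.pairwise_iff_getElem.mp hs) i (i + 1) hi hi1 (by omega)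
    have hstep : l[i] + 2 ≤ l[i + 1] := by
      have h1 := ha.2
      have h2 := hb.2
      omega
    rw [List.getD_eq_getElem l 0 hi] at ihv
    rw [List.getD_eq_getElem l 0 hi1]
    by_cases hc : i + 1 < 175
    · -- use the explicit list of primes
      have hF : F (i + 1) = Lop.getD (i + 1) 0 := if_pos hc
      rw [hF]
      by_cases hbig : l[i + 1] < 1051
      · have hmem : l[i + 1] ∈ Lop := odd_primes_mem _ hbig hb.2 hb.1
        have hgt : Lop.getD i 0 < l[i + 1] := by
          have : F i = Lop.getD i 0 := if_pos (by omega)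
          omega
        exact Lop_next_le hmem (by rw [Lop_length]; omega) hgt
      · have hlt2 : i + 1 < Lop.length := by rw [Lop_length]; omega
        have : Lop.getD (i + 1) 0 ∈ Lop := by
          rw [List.getD_eq_getElem Lop 0 hlt2]
          exact List.getElem_mem hlt2
        have := Lop_le _ this
        omega
    · -- beyond the list: use oddness spacing
      have hF : F (i + 1) = 2 * (i + 1) + 3 := if_neg hc
      rw [hF]
      by_cases hc2 : i < 175
      · -- i = 174
        have hi174 : i = 174 := by omega
        have hFi : F i = 1049 := by rw [hi174]; decide
        omega
      · have hFi : F i = 2 * i + 3 := if_neg hc2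
        omega

lemma list_prod_getD (l : List ℕ) :
    ∏ i ∈ Finset.range l.length, l.getD i 0 = l.prod := by
  induction l with
  | nil => simp
  | cons a t ih =>
    rw [List.length_cons, Finset.prod_range_succ']
    simp only [List.getD_cons_succ, List.getD_cons_zero, List.prod_cons, ih, mul_comm]

lemma prod_bound (S : Finset ℕ) (hp : ∀ p ∈ S, p.Prime ∧ p % 2 = 1)
    (hc : 175 ≤ S.card) : Nop * 353 ^ (S.card - 175) ≤ ∏ p ∈ S, p := by
  set l := S.sort (· ≤ ·) with hl
  have hlen : l.length = S.card := Finset.length_sort _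
  have hsort : l.Pairwise (· < ·) := S.sortedLT_sort.pairwise
  have hmem : ∀ x ∈ l, x.Prime ∧ x % 2 = 1 := fun x hx => hp x ((Finset.mem_sort _).mp hx)
  have hprod : l.prod = ∏ p ∈ S, p := by
    rw [hl]
    rw [← List.map_id (S.sort (· ≤ ·)), (S.sort_perm_toList (· ≤ ·)).map id |>.prod_eq]
    exact Finset.prod_map_toList S id
  have h1 : ∏ i ∈ Finset.range l.length, F i ≤ ∏ i ∈ Finset.range l.length, l.getD i 0 :=
    Finset.prod_le_prod' fun i hi => getD_bound hsort hmem i (Finset.mem_range.mp hi)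
  rw [list_prod_getD, hprod, hlen] at h1
  refine le_trans ?_ h1
  rw [← Finset.prod_range_mul_prod_Ico F hc]
  have h2 : ∏ i ∈ Finset.range 175, F i = Nop := by
    have : ∀ i ∈ Finset.range 175, F i = Lop.getD i 0 := fun i hi =>
      if_pos (Finset.mem_range.mp hi)
    rw [Finset.prod_congr rfl this, ← Lop_length, list_prod_getD, Lop_prod]
  have h3 : 353 ^ (S.card - 175) ≤ ∏ i ∈ Finset.Ico 175 S.card, F i := by
    have : ∏ i ∈ Finset.Ico 175 S.card, (353 : ℕ) ≤ ∏ i ∈ Finset.Ico 175 S.card, F i := by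
      refine Finset.prod_le_prod' fun i hi => ?_
      have hi' := (Finset.mem_Ico.mp hi).1
      have : F i = 2 * i + 3 := if_neg (by omega)
      omega
    rwa [Finset.prod_const, Nat.card_Ico] at this
  calc Nop * 353 ^ (S.card - 175) ≤ Nop * ∏ i ∈ Finset.Ico 175 S.card, F i :=
        Nat.mul_le_mul_left _ h3
    _ = (∏ i ∈ Finset.range 175, F i) * ∏ i ∈ Finset.Ico 175 S.card, F i := by rw [h2]

theorem W_lt_rpow_three_twentyfive (h : ℕ) (hodd : Odd h) (hω : 175 ≤ h.primeFactors.card) :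
    (2 : ℝ) ^ h.primeFactors.card < (h : ℝ) ^ ((3 : ℝ) / 25) := by
  set k := h.primeFactors.card with hk
  have hpos : 0 < h := hodd.pos
  have hp : ∀ p ∈ h.primeFactors, p.Prime ∧ p % 2 = 1 := by
    intro p hpmem
    have hprime := Nat.prime_of_mem_primeFactors hpmem
    refine ⟨hprime, ?_⟩
    have hne : p ≠ 2 := by
      rintro rfl
      have := Nat.dvd_of_mem_primeFactors hpmem
      rw [Nat.odd_iff] at hodd
      omega
    have := hprime.odd_of_ne_two hne
    exact Nat.odd_iff.mp this
  have hle : ∏ p ∈ h.primeFactors, p ≤ h :=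
    Nat.le_of_dvd hpos (Nat.prod_primeFactors_dvd h)
  have hbound := prod_bound h.primeFactors hp hω
  have key : 2 ^ (25 * k) < h ^ 3 := by
    have e1 : 2 ^ (25 * k) = 2 ^ 4375 * (2 ^ 25) ^ (k - 175) := by
      rw [← pow_mul, ← pow_add]
      congr 1
      omega
    have e2 : (Nop * 353 ^ (k - 175)) ^ 3 = Nop ^ 3 * (353 ^ 3) ^ (k - 175) := by
      rw [mul_pow, ← pow_mul, ← pow_mul, Nat.mul_comm (k - 175) 3]
    have hlt : 2 ^ 4375 * (2 ^ 25) ^ (k - 175) < Nop ^ 3 * (353 ^ 3) ^ (k - 175) := by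
      apply Nat.mul_lt_mul_of_lt_of_le Nop_cube (Nat.pow_le_pow_left c353 _)
      exact Nat.pow_pos (by norm_num)
    calc 2 ^ (25 * k) = 2 ^ 4375 * (2 ^ 25) ^ (k - 175) := e1
      _ < Nop ^ 3 * (353 ^ 3) ^ (k - 175) := hlt
      _ = (Nop * 353 ^ (k - 175)) ^ 3 := e2.symm
      _ ≤ (∏ p ∈ h.primeFactors, p) ^ 3 := Nat.pow_le_pow_left hbound 3
      _ ≤ h ^ 3 := Nat.pow_le_pow_left hle 3
  have h0 : (0 : ℝ) ≤ (h : ℝ) := Nat.cast_nonneg h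
  apply lt_of_pow_lt_pow_left₀ 25 (Real.rpow_nonneg h0 _)
  have hrhs : ((h : ℝ) ^ ((3 : ℝ) / 25)) ^ (25 : ℕ) = ((h ^ 3 : ℕ) : ℝ) := by
    rw [← Real.rpow_natCast ((h : ℝ) ^ ((3 : ℝ) / 25)) 25, ← Real.rpow_mul h0,
      show (3 : ℝ) / 25 * ((25 : ℕ) : ℝ) = ((3 : ℕ) : ℝ) by norm_num, Real.rpow_natCast]
    push_cast
    ring
  rw [hrhs, ← pow_mul]
  calc ((2 : ℝ) ^ (k * 25)) = ((2 ^ (25 * k) : ℕ) : ℝ) := by push_cast [Nat.mul_comm]; ring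
    _ < ((h ^ 3 : ℕ) : ℝ) := by exact_mod_cast key
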